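/- Let ε be an admissible cavity and ω a QN eigenvalue with mode ψ = ψ(·,ω;ε) normalized by ψ(0)=0, ψ'(0)=1. Define F(z;ε) = iz(√ε_∞/c)ψ(l,z;ε) - ∂_s ψ(l,z;ε). Then ∂_z F(ω;ε) = (2ω/(c²ψ(l,ω;ε)))·∫₀^l ψ²(s,ω;ε)ε(s) ds + i(√ε_∞/c)ψ(l,ω;ε). In particular, ω is a degenerate QN eigenvalue (multiplicity ≥ 2 as zero of F) if and only if ∫₀^l ψ²(s,ω;ε)ε(s) ds + i(c√ε_∞/(2ω))·ψ²(l,ω;ε) = 0. -/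

import Mathlib

open Set intervalIntegral
open MeasureTheory Filter Topology

private lemma aux_intInt {l : ℝ} (hl : 0 ≤ l) {ε : ℝ → ℝ} (hmeas : Measurable ε)
    {ε₂ : ℝ} (hεb : ∀ s, |ε s| ≤ ε₂) {u : ℝ → ℂ} (hu : ContinuousOn u (Icc 0 l)) :
    IntervalIntegrable (fun s => (ε s : ℂ) * u s) volume 0 l := by
  rw [intervalIntegrable_iff_integrableOn_Ioc_of_le hl]
  obtain ⟨M, hM⟩ := isCompact_Icc.exists_bound_of_continuousOn hu
  refine ⟨((Complex.measurable_ofReal.comp hmeas).aestronglyMeasurable.restrict).mul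
    ((hu.mono Ioc_subset_Icc_self).aestronglyMeasurable measurableSet_Ioc), ?_⟩
  apply HasFiniteIntegral.of_bounded (C := ε₂ * M)
  filter_upwards [ae_restrict_mem measurableSet_Ioc] with s hs
  have h1 : ‖(ε s : ℂ) * u s‖ = |ε s| * ‖u s‖ := by
    simp [map_mul]
  rw [h1]
  have h2 : ‖u s‖ ≤ M := hM s (Ioc_subset_Icc_self hs)
  have h3 := hεb s
  have h4 : (0:ℝ) ≤ ‖u s‖ := norm_nonneg _
  nlinarith [abs_nonneg (ε s)]

/-- Formula for `∂_z F(ω;ε)` at a QN eigenvalue `ω`, and the degeneracy criterion: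
`ω` is a multiple zero of `F` iff `∫₀^l ψ²ε ds + i c√εoo/(2ω) ψ²(l) = 0`. -/
theorem deriv_F_and_degeneracy
    (l c ε₁ ε₂ εoo : ℝ) (hl : 0 < l) (hc : 0 < c)
    (hε₁ : 1 ≤ ε₁) (h12 : ε₁ < ε₂) (hεoo : 1 ≤ εoo)
    (ε : ℝ → ℝ) (hmeas : Measurable ε) (hεb : ∀ s, ε₁ ≤ ε s ∧ ε s ≤ ε₂)
    (Ψ Ψs : ℂ → ℝ → ℂ)
    (hd1 : ∀ z, ∀ s ∈ Icc (0 : ℝ) l, HasDerivAt (Ψ z) (Ψs z s) s)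
    (hd2 : ∀ z, ∀ s ∈ Icc (0 : ℝ) l,
      HasDerivAt (Ψs z) (-(z ^ 2 / (c : ℂ) ^ 2) * (ε s : ℂ) * Ψ z s) s)
    (h0 : ∀ z, Ψ z 0 = 0) (h1 : ∀ z, Ψs z 0 = 1)
    (F : ℂ → ℂ)
    (hF : ∀ z, F z = Complex.I * z * ((Real.sqrt εoo / c : ℝ) : ℂ) * Ψ z l - Ψs z l)
    (ω : ℂ) (hω : ω ≠ 0) (hFω : F ω = 0) (hψl : Ψ ω l ≠ 0) :
    HasDerivAt F
      ((2 * ω / ((c : ℂ) ^ 2 * Ψ ω l)) * (∫ s in (0 : ℝ)..l, (Ψ ω s) ^ 2 * (ε s : ℂ))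
        + Complex.I * ((Real.sqrt εoo / c : ℝ) : ℂ) * Ψ ω l) ω ∧
    (deriv F ω = 0 ↔
      (∫ s in (0 : ℝ)..l, (Ψ ω s) ^ 2 * (ε s : ℂ))
        + Complex.I * (((c * Real.sqrt εoo : ℝ) : ℂ) / (2 * ω)) * (Ψ ω l) ^ 2 = 0) := by
  have hl' : (0:ℝ) ≤ l := hl.le
  have hcC : (c : ℂ) ≠ 0 := by exact_mod_cast hc.ne'
  have hε2pos : 0 < ε₂ := lt_of_lt_of_le one_pos (hε₁.trans h12.le)
  have hεabs : ∀ s, |ε s| ≤ ε₂ := fun s => by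
    rcases hεb s with ⟨hlo, hhi⟩
    rw [abs_le]; constructor <;> nlinarith
  -- continuity of solutions in s
  have contΨ : ∀ z, ContinuousOn (Ψ z) (Icc 0 l) := fun z s hs =>
    ((hd1 z s hs).continuousAt).continuousWithinAt
  have contΨs : ∀ z, ContinuousOn (Ψs z) (Icc 0 l) := fun z s hs =>
    ((hd2 z s hs).continuousAt).continuousWithinAt
  -- define G
  set G : ℂ → ℂ := fun z => ∫ s in (0:ℝ)..l, (ε s : ℂ) * (Ψ z s * Ψ ω s) with hG
  have hGint : ∀ z, IntervalIntegrable (fun s => (ε s : ℂ) * (Ψ z s * Ψ ω s)) volume 0 l :=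
    fun z => aux_intInt hl' hmeas hεabs ((contΨ z).mul (contΨ ω))
  -- Wronskian identity
  have star : ∀ z, Ψ z l * Ψs ω l - Ψs z l * Ψ ω l = ((z^2 - ω^2)/(c:ℂ)^2) * G z := by
    intro z
    have hW : ∀ s ∈ uIcc (0:ℝ) l, HasDerivAt (fun s => Ψ z s * Ψs ω s - Ψs z s * Ψ ω s)
        (((z^2 - ω^2)/(c:ℂ)^2) * ((ε s : ℂ) * (Ψ z s * Ψ ω s))) s := by
      intro s hs
      rw [uIcc_of_le hl'] at hs
      have h := ((hd1 z s hs).mul (hd2 ω s hs)).sub ((hd2 z s hs).mul (hd1 ω s hs))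
      exact h.congr_deriv (by ring)
    have hint : IntervalIntegrable
        (fun s => ((z^2 - ω^2)/(c:ℂ)^2) * ((ε s : ℂ) * (Ψ z s * Ψ ω s))) volume 0 l :=
      (hGint z).const_mul _
    have hFTC := intervalIntegral.integral_eq_sub_of_hasDerivAt hW hint
    rw [intervalIntegral.integral_const_mul] at hFTC
    rw [h0 z, h0 ω, h1 z, h1 ω] at hFTC
    rw [hG]
    linear_combination -hFTC
  -- boundary relation from F ω = 0
  have hbd : Ψs ω l = Complex.I * ω * ((Real.sqrt εoo / c : ℝ) : ℂ) * Ψ ω l := by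
    have := hF ω; rw [hFω] at this; exact (sub_eq_zero.mp this.symm).symm
  -- define H
  set H : ℂ → ℂ := fun z => Complex.I * ((Real.sqrt εoo / c : ℝ) : ℂ) * Ψ z l
      + (z + ω) * G z / ((c:ℂ)^2 * Ψ ω l) with hH
  have hfact : ∀ z, F z = (z - ω) * H z := by
    intro z
    have hinv : Ψ ω l * (Ψ ω l)⁻¹ = 1 := mul_inv_cancel₀ hψl
    rw [hF z, hH]
    linear_combination (Ψ ω l)⁻¹ * star z + (-(Ψ z l) * (Ψ ω l)⁻¹) * hbd
      + (Ψs z l - Complex.I * ω * ((Real.sqrt εoo / c : ℝ) : ℂ) * Ψ z l) * hinv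
  -- continuity estimates via Gronwall
  obtain ⟨M, hM⟩ := isCompact_Icc.exists_bound_of_continuousOn (contΨ ω)
  have hM0 : 0 ≤ M := le_trans (norm_nonneg _) (hM 0 (left_mem_Icc.mpr hl'))
  have key : ∃ C : ℝ, 0 ≤ C ∧ ∀ z : ℂ, dist z ω ≤ 1 → ∀ s ∈ Icc (0:ℝ) l,
      ‖Ψ z s - Ψ ω s‖ ≤ C * ‖z - ω‖ := by
    set Kr : ℝ := max 1 ((‖ω‖+1)^2 * ε₂ / c^2) with hKr
    have hKr1 : (1:ℝ) ≤ Kr := le_max_left _ _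
    have hKr0 : (0:ℝ) < Kr := lt_of_lt_of_le one_pos hKr1
    set K : NNReal := Real.toNNReal Kr with hKdef
    have hKK : (K : ℝ) = Kr := Real.coe_toNNReal _ hKr0.le
    refine ⟨(ε₂ * M / c^2) * (2*‖ω‖+1) * (Real.exp (Kr*l) / Kr), by positivity, ?_⟩
    intro z hz s hs
    have hznorm : ‖z‖ ≤ ‖ω‖ + 1 := by
      calc ‖z‖ = ‖ω + (z - ω)‖ := by ring_nf
        _ ≤ ‖ω‖ + ‖z - ω‖ := norm_add_le _ _
        _ ≤ ‖ω‖ + 1 := by rw [← dist_eq_norm] at *; linarith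
    -- the vector field
    set v : ℝ → (ℂ × ℂ) → (ℂ × ℂ) :=
      fun t p => (p.2, -(z^2/(c:ℂ)^2) * (ε t : ℂ) * p.1) with hv
    have hA : ∀ t, ‖-(z^2/(c:ℂ)^2) * (ε t : ℂ)‖ ≤ Kr := by
      intro t
      have : ‖-(z^2/(c:ℂ)^2) * (ε t : ℂ)‖ = ‖z‖^2 / c^2 * |ε t| := by
        rw [norm_mul, norm_neg, norm_div, norm_pow, norm_pow]
        simp [abs_of_pos hc]
      rw [this]
      refine le_trans ?_ (le_max_right 1 _)
      have h1 : ‖z‖^2 ≤ (‖ω‖+1)^2 := by nlinarith [norm_nonneg z]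
      have h2 := hεabs t
      have h3 : (0:ℝ) < c^2 := by positivity
      have h4 : (0:ℝ) ≤ |ε t| := abs_nonneg _
      rw [div_mul_eq_mul_div, div_le_div_iff₀ h3 h3]
      nlinarith [mul_le_mul h1 h2 h4 (by positivity : (0:ℝ) ≤ (‖ω‖+1)^2), h3.le]
    have hlip : ∀ t, LipschitzWith K (v t) := by
      intro t
      apply LipschitzWith.of_dist_le_mul
      intro p q
      rw [hKK]
      have hPd : dist (v t p) (v t q) = max (dist p.2 q.2)
          (‖-(z^2/(c:ℂ)^2) * (ε t : ℂ)‖ * dist p.1 q.1) := by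
        rw [hv]
        simp only [Prod.dist_eq]
        congr 1
        rw [dist_eq_norm, dist_eq_norm, ← norm_mul]
        congr 1
        ring
      rw [hPd, Prod.dist_eq]
      apply max_le
      · exact le_trans (le_max_right _ _)
          (le_mul_of_one_le_left (le_max_of_le_right dist_nonneg) hKr1)
      · calc ‖-(z^2/(c:ℂ)^2) * (ε t : ℂ)‖ * dist p.1 q.1
            ≤ Kr * dist p.1 q.1 := mul_le_mul_of_nonneg_right (hA t) dist_nonneg
          _ ≤ Kr * max (dist p.1 q.1) (dist p.2 q.2) := by
              gcongr; exact le_max_left _ _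
    have hεf0 : (0:ℝ) ≤ ‖z^2 - ω^2‖ / c^2 * (ε₂ * M) := by positivity
    have hgron := dist_le_of_approx_trajectories_ODE (v := v) (K := K)
      (f := fun t => (Ψ ω t, Ψs ω t))
      (f' := fun t => (Ψs ω t, -(ω^2/(c:ℂ)^2) * (ε t : ℂ) * Ψ ω t))
      (g := fun t => (Ψ z t, Ψs z t))
      (g' := fun t => (Ψs z t, -(z^2/(c:ℂ)^2) * (ε t : ℂ) * Ψ z t))
      (a := 0) (b := l) (εf := ‖z^2 - ω^2‖ / c^2 * (ε₂ * M)) (εg := 0) (δ := 0)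
      hlip
      ((contΨ ω).prodMk (contΨs ω))
      (fun t ht => ((hd1 ω t (Ico_subset_Icc_self ht)).prodMk
        (hd2 ω t (Ico_subset_Icc_self ht))).hasDerivWithinAt)
      (by
        intro t ht
        have htI : t ∈ Icc (0:ℝ) l := Ico_subset_Icc_self ht
        rw [hv]
        simp only [Prod.dist_eq, dist_self]
        rw [max_eq_right dist_nonneg, dist_eq_norm]
        have : -(ω^2/(c:ℂ)^2) * (ε t : ℂ) * Ψ ω t - -(z^2/(c:ℂ)^2) * (ε t : ℂ) * Ψ ω t
            = ((z^2 - ω^2)/(c:ℂ)^2) * (ε t : ℂ) * Ψ ω t := by ring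
        rw [this]
        rw [norm_mul, norm_mul, norm_div, norm_pow]
        have hc2 : ‖(c:ℂ)‖^2 = c^2 := by
          simp [abs_of_pos hc]
        rw [hc2]
        have he : ‖((ε t : ℝ) : ℂ)‖ ≤ ε₂ := by
          rw [Complex.norm_real, Real.norm_eq_abs]; exact hεabs t
        have hu : ‖Ψ ω t‖ ≤ M := hM t htI
        have h5 : (0:ℝ) ≤ ‖z^2 - ω^2‖ / c^2 := by positivity
        have h6 : (0:ℝ) ≤ ‖((ε t : ℝ) : ℂ)‖ := norm_nonneg _
        have h7 : (0:ℝ) ≤ ‖Ψ ω t‖ := norm_nonneg _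
        nlinarith [mul_le_mul_of_nonneg_left (mul_le_mul he hu h7 hε2pos.le) h5])
      ((contΨ z).prodMk (contΨs z))
      (fun t ht => ((hd1 z t (Ico_subset_Icc_self ht)).prodMk
        (hd2 z t (Ico_subset_Icc_self ht))).hasDerivWithinAt)
      (fun t ht => by simp [hv, Prod.dist_eq])
      (by simp [h0 z, h0 ω, h1 z, h1 ω])
    have hsI := hgron s hs
    have hcomp : ‖Ψ z s - Ψ ω s‖ ≤ dist ((Ψ ω s, Ψs ω s) : ℂ × ℂ) (Ψ z s, Ψs z s) := by
      rw [Prod.dist_eq]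
      refine le_trans ?_ (le_max_left _ _)
      rw [dist_comm, dist_eq_norm]
    have hεfE : (0:ℝ) ≤ ‖z^2 - ω^2‖ / c^2 * (ε₂ * M) / Kr := by positivity
    have hgb : gronwallBound 0 (K:ℝ) (‖z^2 - ω^2‖ / c^2 * (ε₂ * M) + 0) (s - 0)
        ≤ (‖z^2 - ω^2‖ / c^2 * (ε₂ * M)) * (Real.exp (Kr*l) / Kr) := by
      rw [hKK, gronwallBound_of_K_ne_0 hKr0.ne']
      simp only [zero_mul, zero_add, add_zero, sub_zero]
      have h8 : Real.exp (Kr*s) - 1 ≤ Real.exp (Kr*l) := by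
        have := Real.exp_le_exp.mpr (mul_le_mul_of_nonneg_left hs.2 hKr0.le)
        linarith
      calc ‖z^2 - ω^2‖ / c^2 * (ε₂ * M) / Kr * (Real.exp (Kr*s) - 1)
          ≤ ‖z^2 - ω^2‖ / c^2 * (ε₂ * M) / Kr * Real.exp (Kr*l) :=
            mul_le_mul_of_nonneg_left h8 hεfE
        _ = ‖z^2 - ω^2‖ / c^2 * (ε₂ * M) * (Real.exp (Kr*l) / Kr) := by ring
    have hfz : ‖z^2 - ω^2‖ ≤ (2*‖ω‖+1) * ‖z-ω‖ := by
      have he : z^2 - ω^2 = (z+ω)*(z-ω) := by ring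
      rw [he, norm_mul]
      have h9 : ‖z+ω‖ ≤ 2*‖ω‖+1 := by
        calc ‖z+ω‖ ≤ ‖z‖ + ‖ω‖ := norm_add_le _ _
          _ ≤ 2*‖ω‖+1 := by linarith
      exact mul_le_mul_of_nonneg_right h9 (norm_nonneg _)
    calc ‖Ψ z s - Ψ ω s‖ ≤ dist ((Ψ ω s, Ψs ω s) : ℂ × ℂ) (Ψ z s, Ψs z s) := hcomp
      _ ≤ gronwallBound 0 (K:ℝ) (‖z^2 - ω^2‖ / c^2 * (ε₂ * M) + 0) (s - 0) := hsI
      _ ≤ (‖z^2 - ω^2‖ / c^2 * (ε₂ * M)) * (Real.exp (Kr*l) / Kr) := hgb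
      _ ≤ (ε₂ * M / c^2) * (2*‖ω‖+1) * (Real.exp (Kr*l) / Kr) * ‖z - ω‖ := by
          have hE : (0:ℝ) ≤ Real.exp (Kr*l) / Kr := by positivity
          have hc2 : (0:ℝ) < c^2 := by positivity
          have h10 : ‖z^2 - ω^2‖ / c^2 * (ε₂ * M)
              ≤ (ε₂ * M / c^2) * ((2*‖ω‖+1) * ‖z - ω‖) := by
            have h11 := mul_le_mul_of_nonneg_right hfz
              (show (0:ℝ) ≤ ε₂*M/c^2 by positivity)
            calc ‖z^2-ω^2‖/c^2*(ε₂*M) = ‖z^2-ω^2‖*(ε₂*M/c^2) := by ring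
              _ ≤ (2*‖ω‖+1)*‖z-ω‖*(ε₂*M/c^2) := h11
              _ = (ε₂*M/c^2)*((2*‖ω‖+1)*‖z-ω‖) := by ring
          calc ‖z^2 - ω^2‖ / c^2 * (ε₂ * M) * (Real.exp (Kr*l) / Kr)
              ≤ (ε₂ * M / c^2) * ((2*‖ω‖+1) * ‖z - ω‖) * (Real.exp (Kr*l) / Kr) :=
                mul_le_mul_of_nonneg_right h10 hE
            _ = (ε₂ * M / c^2) * (2*‖ω‖+1) * (Real.exp (Kr*l) / Kr) * ‖z - ω‖ := by ring
  -- tendsto of H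
  have hHt : Tendsto H (𝓝 ω) (𝓝 (H ω)) := by
    obtain ⟨C, hC0, hC⟩ := key
    have hball : Metric.closedBall ω 1 ∈ 𝓝 ω := Metric.closedBall_mem_nhds ω one_pos
    have hΨt : Tendsto (fun z => Ψ z l) (𝓝 ω) (𝓝 (Ψ ω l)) := by
      rw [tendsto_iff_dist_tendsto_zero]
      have hb : ∀ᶠ z in 𝓝 ω, dist (Ψ z l) (Ψ ω l) ≤ C * dist z ω := by
        filter_upwards [hball] with z hz
        rw [Metric.mem_closedBall] at hz
        rw [dist_eq_norm, dist_eq_norm]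
        exact hC z hz l (right_mem_Icc.mpr hl')
      have hg0 : Tendsto (fun z : ℂ => C * dist z ω) (𝓝 ω) (𝓝 0) := by
        have h1 : Tendsto (fun z : ℂ => dist z ω) (𝓝 ω) (𝓝 (dist ω ω)) :=
          tendsto_id.dist tendsto_const_nhds
        rw [dist_self] at h1
        simpa using h1.const_mul C
      exact squeeze_zero' (Filter.Eventually.of_forall fun z => dist_nonneg) hb hg0
    have hGt : Tendsto G (𝓝 ω) (𝓝 (G ω)) := by
      rw [tendsto_iff_dist_tendsto_zero]
      have hb : ∀ᶠ z in 𝓝 ω, dist (G z) (G ω) ≤ (ε₂ * C * M * l) * dist z ω := by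
        filter_upwards [hball] with z hz
        rw [Metric.mem_closedBall] at hz
        have hsub : G z - G ω
            = ∫ s in (0:ℝ)..l, ((ε s:ℂ) * (Ψ z s * Ψ ω s) - (ε s:ℂ) * (Ψ ω s * Ψ ω s)) :=
          (intervalIntegral.integral_sub (hGint z) (hGint ω)).symm
        rw [dist_eq_norm, hsub]
        have hptw : ∀ s ∈ Set.uIoc (0:ℝ) l,
            ‖(ε s:ℂ) * (Ψ z s * Ψ ω s) - (ε s:ℂ) * (Ψ ω s * Ψ ω s)‖
              ≤ ε₂ * (C * dist z ω) * M := by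
          intro s hsI
          have hsIcc : s ∈ Icc (0:ℝ) l := by
            rw [Set.uIoc_of_le hl'] at hsI
            exact Ioc_subset_Icc_self hsI
          have he1 : (ε s:ℂ) * (Ψ z s * Ψ ω s) - (ε s:ℂ) * (Ψ ω s * Ψ ω s)
              = (ε s:ℂ) * ((Ψ z s - Ψ ω s) * Ψ ω s) := by ring
          rw [he1, norm_mul, norm_mul]
          have e1 : ‖((ε s : ℝ) : ℂ)‖ ≤ ε₂ := by
            rw [Complex.norm_real, Real.norm_eq_abs]; exact hεabs s
          have e2 : ‖Ψ z s - Ψ ω s‖ ≤ C * dist z ω := by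
            rw [dist_eq_norm]; exact hC z hz s hsIcc
          have e3 : ‖Ψ ω s‖ ≤ M := hM s hsIcc
          have e4 : (0:ℝ) ≤ C * dist z ω := mul_nonneg hC0 dist_nonneg
          nlinarith [mul_le_mul (mul_le_mul e1 e2 (norm_nonneg _) hε2pos.le) e3
            (norm_nonneg _) (mul_nonneg hε2pos.le e4), norm_nonneg (Ψ z s - Ψ ω s),
            norm_nonneg (((ε s : ℝ) : ℂ)), norm_nonneg (Ψ ω s)]
        have hbnd := intervalIntegral.norm_integral_le_of_norm_le_const hptw
        rw [sub_zero, abs_of_nonneg hl'] at hbnd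
        calc ‖∫ s in (0:ℝ)..l, ((ε s:ℂ) * (Ψ z s * Ψ ω s) - (ε s:ℂ) * (Ψ ω s * Ψ ω s))‖
            ≤ ε₂ * (C * dist z ω) * M * l := hbnd
          _ = (ε₂ * C * M * l) * dist z ω := by ring
      have hg0 : Tendsto (fun z : ℂ => (ε₂ * C * M * l) * dist z ω) (𝓝 ω) (𝓝 0) := by
        have h1 : Tendsto (fun z : ℂ => dist z ω) (𝓝 ω) (𝓝 (dist ω ω)) :=
          tendsto_id.dist tendsto_const_nhds
        rw [dist_self] at h1
        simpa using h1.const_mul (ε₂ * C * M * l)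
      exact squeeze_zero' (Filter.Eventually.of_forall fun z => dist_nonneg) hb hg0
    rw [hH]
    exact (tendsto_const_nhds.mul hΨt).add
      (((tendsto_id.add tendsto_const_nhds).mul hGt).div_const _)
  -- conclude HasDerivAt
  have hder : HasDerivAt F (H ω) ω := by
    rw [hasDerivAt_iff_tendsto_slope]
    have : Tendsto H (𝓝[≠] ω) (𝓝 (H ω)) := hHt.mono_left nhdsWithin_le_nhds
    refine this.congr' ?_
    filter_upwards [self_mem_nhdsWithin] with z hz
    have hz' : z - ω ≠ 0 := sub_ne_zero.mpr hz
    rw [slope_def_field, hfact z, hFω, sub_zero, mul_comm, mul_div_assoc,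
      div_self hz', mul_one]
  -- identify H ω with the stated derivative
  have hGω : G ω = ∫ s in (0:ℝ)..l, (Ψ ω s) ^ 2 * (ε s : ℂ) := by
    apply intervalIntegral.integral_congr
    intro s _; ring
  have hHω : H ω = (2 * ω / ((c : ℂ) ^ 2 * Ψ ω l)) * (∫ s in (0 : ℝ)..l, (Ψ ω s) ^ 2 * (ε s : ℂ))
        + Complex.I * ((Real.sqrt εoo / c : ℝ) : ℂ) * Ψ ω l := by
    rw [hH]; simp only []; rw [hGω]; ring
  constructor
  · rw [← hHω]; exact hder
  · rw [hder.deriv, hHω]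
    have hne : (2 * ω / ((c:ℂ)^2 * Ψ ω l)) ≠ 0 :=
      div_ne_zero (mul_ne_zero two_ne_zero hω)
        (mul_ne_zero (pow_ne_zero 2 hcC) hψl)
    have hfac : (2 * ω / ((c : ℂ) ^ 2 * Ψ ω l))
          * (∫ s in (0 : ℝ)..l, (Ψ ω s) ^ 2 * (ε s : ℂ))
        + Complex.I * ((Real.sqrt εoo / c : ℝ) : ℂ) * Ψ ω l
        = (2 * ω / ((c:ℂ)^2 * Ψ ω l)) *
          ((∫ s in (0 : ℝ)..l, (Ψ ω s) ^ 2 * (ε s : ℂ))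
            + Complex.I * (((c * Real.sqrt εoo : ℝ) : ℂ) / (2 * ω)) * (Ψ ω l) ^ 2) := by
      have hinvω : ω * ω⁻¹ = 1 := mul_inv_cancel₀ hω
      have hinvc : (c:ℂ) * ((c:ℂ))⁻¹ = 1 := mul_inv_cancel₀ hcC
      have hinvP : Ψ ω l * (Ψ ω l)⁻¹ = 1 := mul_inv_cancel₀ hψl
      push_cast
      linear_combination
        (-(Complex.I * (Real.sqrt εoo : ℂ) * ((c:ℂ))⁻¹ * Ψ ω l)) * hinvω
        + (-(Complex.I * (Real.sqrt εoo : ℂ) * ω * ω⁻¹ * Ψ ω l * ((c:ℂ))⁻¹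
            * (Ψ ω l * (Ψ ω l)⁻¹))) * hinvc
        + (-(Complex.I * (Real.sqrt εoo : ℂ) * ω * ω⁻¹ * Ψ ω l * ((c:ℂ))⁻¹)) * hinvP
    rw [hfac, mul_eq_zero, or_iff_right hne]
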